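/- For every integer n ≥ 3 and every real number λ, det(Λ_n − λ·I) equals the value of the polynomial A_n evaluated at 2 − λ; that is, the characteristic determinant of the Laplacian of the cycle Z_n is A_n(2 − λ). -/

import Mathlib

open Polynomial

/-- The sequence of integer polynomials `L 0 = 1`, `L 1 = X`,
`L (n+2) = X * L (n+1) - L n`. -/
noncomputable def L : ℕ → Polynomial ℤ
  | 0 => 1
  | 1 => X
  | n + 2 => X * L (n + 1) - L n

/-- The sequence of integer polynomials `A 0 = 0`, `A 1 = X - 2`,
`A n = L n - L (n-2) - 2` for `n ≥ 2`. -/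
noncomputable def A : ℕ → Polynomial ℤ
  | 0 => 0
  | 1 => X - 2
  | n + 2 => L (n + 2) - L n - 2

/-- The Laplacian of the Cayley graph of `Z n` with generating set `{1, -1}`:
diagonal entries `2`, entries `-1` between neighbouring vertices, `0` otherwise. -/
noncomputable def cycleLaplacian (n : ℕ) : Matrix (ZMod n) (ZMod n) ℝ :=
  Matrix.of fun i j =>
    if i = j then 2 else if j = i + 1 ∨ j = i - 1 then -1 else 0

/-- The characteristic determinant `det (Λ_n - λ • I)` of the cycle Laplacian. -/
noncomputable def lapCharDet (n : ℕ) (lam : ℝ) : ℝ :=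
  if h : n = 0 then 0
  else
    haveI : NeZero n := ⟨h⟩
    (cycleLaplacian n - lam • (1 : Matrix (ZMod n) (ZMod n) ℝ)).det

/-- `lam` is an eigenvalue of the Laplacian of `Z n`. -/
def IsLapEigenvalue (n : ℕ) (lam : ℝ) : Prop := lapCharDet n lam = 0

namespace Stmt2Aux

open Matrix

/-- entry function for the tridiagonal (path) matrix, depending only on ℕ indices -/
noncomputable def entf (x : ℝ) (a b : ℕ) : ℝ :=
  if a = b then x else if b = a + 1 ∨ a = b + 1 then -1 else 0

lemma entf_shift (x : ℝ) (a b : ℕ) : entf x (a + 1) (b + 1) = entf x a b := by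
  unfold entf
  split_ifs <;> first | rfl | (exfalso; omega)

/-- tridiagonal matrix -/
noncomputable def Tm (x : ℝ) (n : ℕ) : Matrix (Fin n) (Fin n) ℝ :=
  Matrix.of fun i j => entf x i j

lemma detT (x : ℝ) : ∀ n : ℕ, (Tm x n).det = Polynomial.aeval x (L n)
  | 0 => by
      simp [Matrix.det_fin_zero, L]
  | 1 => by
      rw [Matrix.det_fin_one]
      simp [Tm, entf, L]
  | n + 2 => by
      have hA : (Tm x (n + 2)).submatrix Fin.succ (Fin.succAbove 0) = Tm x (n + 1) := by
        ext a b
        simp only [Fin.succAbove_zero, Matrix.submatrix_apply, Tm, Matrix.of_apply,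
          Fin.val_succ]
        exact entf_shift x a b
      have hB : ((Tm x (n + 2)).submatrix Fin.succ (Fin.succAbove 1)).det
          = -(Tm x n).det := by
        rw [Matrix.det_succ_column_zero]
        rw [Finset.sum_eq_single 0]
        · have h00 : (Tm x (n + 2)).submatrix Fin.succ (Fin.succAbove 1) 0 0 = -1 := by
            have : (1 : Fin (n + 2)).succAbove 0 = 0 := Fin.one_succAbove_zero
            simp only [Matrix.submatrix_apply, this, Tm, Matrix.of_apply, entf]
            norm_num
          rw [h00]
          have hsub : ((Tm x (n + 2)).submatrix Fin.succ (Fin.succAbove 1)).submatrix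
              (Fin.succAbove 0) Fin.succ = Tm x n := by
            ext a b
            have hcol : (1 : Fin (n + 2)).succAbove (Fin.succ b) = (Fin.succ b).succ := by
              apply Fin.succAbove_of_le_castSucc
              rw [Fin.le_castSucc_iff]
              simp [Fin.lt_iff_val_lt_val]
            simp only [Matrix.submatrix_apply, Fin.succAbove_zero, hcol, Tm, Matrix.of_apply,
              Fin.val_succ]
            rw [entf_shift, entf_shift]
          rw [hsub]
          simp
        · intro i _ hi
          have h0 : (Tm x (n + 2)).submatrix Fin.succ (Fin.succAbove 1) i 0 = 0 := by
            have : (1 : Fin (n + 2)).succAbove 0 = 0 := Fin.one_succAbove_zero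
            have hv : (i : ℕ) ≠ 0 := fun h => hi (Fin.ext h)
            simp only [Matrix.submatrix_apply, this, Tm, Matrix.of_apply, entf, Fin.val_succ,
              Fin.val_zero]
            have c1 : ¬ ((i : ℕ) + 1 = 0) := by omega
            have c2 : ¬ (0 = (i : ℕ) + 1 + 1 ∨ (i : ℕ) + 1 = 0 + 1) := by omega
            simp only [c1, c2, ↓reduceIte]
          rw [h0]
          ring
        · simp
      rw [Matrix.det_succ_row_zero, Fin.sum_univ_succ, Fin.sum_univ_succ]
      have htail : ∀ j : Fin n,
          (-1 : ℝ) ^ ((j.succ.succ : Fin (n+2)) : ℕ) * Tm x (n + 2) 0 j.succ.succ *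
            ((Tm x (n + 2)).submatrix Fin.succ (Fin.succAbove j.succ.succ)).det = 0 := by
        intro j
        have : Tm x (n + 2) 0 j.succ.succ = 0 := by
          simp only [Tm, Matrix.of_apply, entf, Fin.val_zero, Fin.val_succ]
          have c1 : ¬ (0 = (j : ℕ) + 1 + 1) := by omega
          have c2 : ¬ ((j : ℕ) + 1 + 1 = 0 + 1 ∨ 0 = (j : ℕ) + 1 + 1 + 1) := by omega
          simp only [c1, c2, ↓reduceIte]
        rw [this]
        ring
      rw [Finset.sum_eq_zero fun j _ => htail j]
      have h00 : Tm x (n + 2) 0 0 = x := by simp [Tm, entf]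
      have h01 : Tm x (n + 2) 0 (Fin.succ 0) = -1 := by
        simp only [Tm, Matrix.of_apply, entf, Fin.val_zero, Fin.val_succ]
        norm_num
      rw [h00, h01, Fin.succ_zero_eq_one, hA, hB, detT x (n + 1), detT x n]
      rw [show L (n + 2) = X * L (n + 1) - L n from rfl]
      rw [map_sub, _root_.map_mul, aeval_X]
      simp only [Fin.val_zero, pow_zero, one_mul, Fin.val_one, pow_one]
      ring

end Stmt2Aux

namespace Part2

open Matrix Stmt2Aux

noncomputable def cf (x : ℝ) (n a b : ℕ) : ℝ :=
  if a = b then x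
  else if b = a + 1 ∨ a = b + 1 ∨ (a = 0 ∧ b = n - 1) ∨ (b = 0 ∧ a = n - 1) then -1 else 0

noncomputable def Cm (x : ℝ) (n : ℕ) : Matrix (Fin n) (Fin n) ℝ :=
  Matrix.of fun i j => cf x n i j

noncomputable def uvec (m : ℕ) : Fin (m + 3) → ℝ := fun j => if (j : ℕ) = m + 2 then -1 else 0

noncomputable def wvec (m : ℕ) : Fin (m + 3) → ℝ := fun j => if (j : ℕ) = 0 then -1 else 0

lemma last_ne_zero (m : ℕ) : (Fin.last (m + 2) : Fin (m + 3)) ≠ 0 := by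
  simp [Fin.ext_iff]

/-- determinant of the tridiagonal matrix with row 0 replaced by `uvec` -/
lemma detU (x : ℝ) (m : ℕ) : ((Tm x (m + 3)).updateRow 0 (uvec m)).det = -1 := by
  set B := (Tm x (m + 3)).updateRow 0 (uvec m) with hB
  rw [Matrix.det_succ_row_zero, Finset.sum_eq_single (Fin.last (m + 2))]
  · have h0 : B 0 (Fin.last (m + 2)) = -1 := by
      rw [hB, Matrix.updateRow_self]
      simp [uvec]
    have htri : (B.submatrix Fin.succ Fin.castSucc).BlockTriangular id := by
      intro i j hij
      have : Fin.succ i ≠ 0 := Fin.succ_ne_zero i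
      simp only [Matrix.submatrix_apply, hB, Matrix.updateRow_ne this, Tm, Matrix.of_apply,
        entf, Fin.val_succ, Fin.coe_castSucc]
      have hji : (j : ℕ) < (i : ℕ) := hij
      rw [if_neg (by omega), if_neg (by omega)]
    have hdiag : ∀ i : Fin (m + 2), B.submatrix Fin.succ Fin.castSucc i i = -1 := by
      intro i
      have : Fin.succ i ≠ 0 := Fin.succ_ne_zero i
      simp only [Matrix.submatrix_apply, hB, Matrix.updateRow_ne this, Tm, Matrix.of_apply,
        entf, Fin.val_succ, Fin.coe_castSucc]
      rw [if_neg (by omega)]; simp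
    rw [h0, Fin.succAbove_last, Matrix.det_of_upperTriangular htri,
      Finset.prod_congr rfl fun i _ => hdiag i, Finset.prod_const]
    simp only [Finset.card_univ, Fintype.card_fin, Fin.val_last]
    rw [mul_comm ((-1 : ℝ) ^ (m + 2)) (-1), mul_assoc, ← mul_pow]
    norm_num
  · intro j _ hj
    have : B 0 j = 0 := by
      rw [hB, Matrix.updateRow_self]
      have : (j : ℕ) ≠ m + 2 := by
        intro h; exact hj (Fin.ext (by simpa using h))
      simp [uvec, this]
    rw [this]; ring
  · simp

/-- determinant of the tridiagonal matrix with the last row replaced by `wvec` -/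
lemma detW (x : ℝ) (m : ℕ) : ((Tm x (m + 3)).updateRow (Fin.last (m + 2)) (wvec m)).det = -1 := by
  set B := (Tm x (m + 3)).updateRow (Fin.last (m + 2)) (wvec m) with hB
  rw [Matrix.det_succ_row _ (Fin.last (m + 2)), Finset.sum_eq_single 0]
  · have h0 : B (Fin.last (m + 2)) 0 = -1 := by
      rw [hB, Matrix.updateRow_self]
      simp [wvec]
    have hrow : ∀ (i : Fin (m + 2)) (c : Fin (m + 3)), B (Fin.castSucc i) c
        = entf x i c := by
      intro i c
      have : Fin.castSucc i ≠ Fin.last (m + 2) := by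
        intro h
        have := congrArg Fin.val h
        simp only [Fin.coe_castSucc, Fin.val_last] at this
        omega
      rw [hB, Matrix.updateRow_ne this]
      rfl
    have htri : (B.submatrix Fin.castSucc Fin.succ).BlockTriangular OrderDual.toDual := by
      intro i j hij
      have hji : (i : ℕ) < (j : ℕ) := hij
      simp only [Matrix.submatrix_apply, hrow, entf, Fin.val_succ]
      rw [if_neg (by omega), if_neg (by omega)]
    have hdiag : ∀ i : Fin (m + 2), B.submatrix Fin.castSucc Fin.succ i i = -1 := by
      intro i
      simp only [Matrix.submatrix_apply, hrow, entf, Fin.val_succ]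
      rw [if_neg (by omega)]; simp
    rw [h0, Fin.succAbove_last, Fin.succAbove_zero, Matrix.det_of_lowerTriangular _ htri,
      Finset.prod_congr rfl fun i _ => hdiag i, Finset.prod_const]
    simp only [Finset.card_univ, Fintype.card_fin, Fin.val_last, Fin.val_zero, Nat.add_zero]
    rw [mul_comm ((-1 : ℝ) ^ (m + 2)) (-1), mul_assoc, ← mul_pow]
    norm_num
  · intro j _ hj
    have : B (Fin.last (m + 2)) j = 0 := by
      rw [hB, Matrix.updateRow_self]
      have : (j : ℕ) ≠ 0 := by
        intro h; exact hj (Fin.ext (by simpa using h))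
      simp [wvec, this]
    rw [this]; ring
  · simp

/-- determinant of the doubly-updated matrix -/
lemma detG (x : ℝ) (m : ℕ) :
    (((Tm x (m + 3)).updateRow (Fin.last (m + 2)) (wvec m)).updateRow 0 (uvec m)).det
      = -(Polynomial.aeval x (L (m + 1))) := by
  set G := ((Tm x (m + 3)).updateRow (Fin.last (m + 2)) (wvec m)).updateRow 0 (uvec m) with hG
  have hGrow : ∀ (i : Fin (m + 3)), i ≠ 0 → i ≠ Fin.last (m + 2) →
      ∀ c : Fin (m + 3), G i c = entf x i c := by
    intro i hi0 hil c
    rw [hG, Matrix.updateRow_ne hi0, Matrix.updateRow_ne hil]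
    rfl
  rw [Matrix.det_succ_row_zero, Finset.sum_eq_single (Fin.last (m + 2))]
  · have h0 : G 0 (Fin.last (m + 2)) = -1 := by
      rw [hG, Matrix.updateRow_self]; simp [uvec]
    rw [h0, Fin.succAbove_last]
    set H := G.submatrix Fin.succ Fin.castSucc with hH
    have hHdet : H.det = (-1 : ℝ) ^ m * (Polynomial.aeval x (L (m + 1))) := by
      rw [Matrix.det_succ_row H (Fin.last (m + 1)), Finset.sum_eq_single 0]
      · have hlast : Fin.succ (Fin.last (m + 1)) = Fin.last (m + 2) := Fin.succ_last (m + 1)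
        have hH0 : H (Fin.last (m + 1)) 0 = -1 := by
          rw [hH]
          simp only [Matrix.submatrix_apply, hlast]
          rw [hG, Matrix.updateRow_ne (last_ne_zero m), Matrix.updateRow_self]
          simp [wvec]
        have hsub : H.submatrix Fin.castSucc Fin.succ = Tm x (m + 1) := by
          ext a b
          have hne0 : Fin.succ (Fin.castSucc a) ≠ (0 : Fin (m + 3)) := Fin.succ_ne_zero _
          have hnel : Fin.succ (Fin.castSucc a) ≠ Fin.last (m + 2) := by
            intro h
            have := congrArg Fin.val h
            simp only [Fin.val_succ, Fin.coe_castSucc, Fin.val_last] at this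
            omega
          simp only [hH, Matrix.submatrix_apply, hGrow _ hne0 hnel, Fin.val_succ,
            Fin.coe_castSucc, Tm, Matrix.of_apply]
          rw [entf_shift]
        rw [hH0, Fin.succAbove_last, Fin.succAbove_zero, hsub, detT]
        simp only [Fin.val_last, Fin.val_zero, Nat.add_zero]
        have key2 : ((-1 : ℝ)) ^ (m + 1) * (-1) = (-1 : ℝ) ^ m := by
          rw [pow_succ]; ring
        linear_combination (Polynomial.aeval x (L (m + 1))) * key2
      · intro j _ hj
        have : H (Fin.last (m + 1)) j = 0 := by
          rw [hH]
          simp only [Matrix.submatrix_apply, Fin.succ_last]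
          rw [hG, Matrix.updateRow_ne (last_ne_zero m), Matrix.updateRow_self]
          have : (j : ℕ) ≠ 0 := by
            intro h; exact hj (Fin.ext (by simpa using h))
          simp [wvec, this]
        rw [this]; ring
      · simp
    rw [hHdet]
    simp only [Fin.val_last]
    have key : ((-1 : ℝ)) ^ (m + 2) * (-1 : ℝ) ^ m = 1 := by
      rw [← pow_add]
      exact Even.neg_one_pow ⟨m + 1, by ring⟩
    linear_combination (-(Polynomial.aeval x (L (m + 1)))) * key
  · intro j _ hj
    have : G 0 j = 0 := by
      rw [hG, Matrix.updateRow_self]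
      have : (j : ℕ) ≠ m + 2 := by
        intro h; exact hj (Fin.ext (by simpa using h))
      simp [uvec, this]
    rw [this]; ring
  · simp


lemma Cm_eq (x : ℝ) (m : ℕ) :
    Cm x (m + 3) =
      ((Tm x (m + 3)).updateRow 0 ((Tm x (m + 3)) 0 + uvec m)).updateRow (Fin.last (m + 2))
        ((Tm x (m + 3)) (Fin.last (m + 2)) + wvec m) := by
  ext i j
  rw [Matrix.updateRow_apply, Matrix.updateRow_apply]
  simp only [Pi.add_apply, Cm, Tm, Matrix.of_apply, cf, entf, uvec, wvec, Fin.ext_iff,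
    Fin.val_last, Fin.val_zero]
  split_ifs <;>
    first
      | rfl
      | (exfalso; omega)
      | (exfalso; simp only [or_false, false_or, and_true, true_and, and_false,
          false_and] at *; omega)
      | ring

lemma detC (x : ℝ) (m : ℕ) :
    (Cm x (m + 3)).det =
      Polynomial.aeval x (L (m + 3)) - Polynomial.aeval x (L (m + 1)) - 2 := by
  have hne : (Fin.last (m + 2) : Fin (m + 3)) ≠ 0 := last_ne_zero m
  rw [Cm_eq]
  set T := Tm x (m + 3) with hT
  set M := T.updateRow 0 (T 0 + uvec m) with hM
  rw [Matrix.det_updateRow_add]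
  have hMlast : M (Fin.last (m + 2)) = T (Fin.last (m + 2)) := Matrix.updateRow_ne hne
  rw [← hMlast, Matrix.updateRow_eq_self]
  have h2 : M.det = T.det + (T.updateRow 0 (uvec m)).det := by
    rw [hM, Matrix.det_updateRow_add, Matrix.updateRow_eq_self]
  have h3 : M.updateRow (Fin.last (m + 2)) (wvec m)
      = (T.updateRow (Fin.last (m + 2)) (wvec m)).updateRow 0 (T 0 + uvec m) := by
    ext i j
    by_cases hi0 : i = 0
    · subst hi0
      rw [Matrix.updateRow_ne (Ne.symm hne), Matrix.updateRow_self, hM, Matrix.updateRow_self]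
    · by_cases hil : i = Fin.last (m + 2)
      · subst hil
        rw [Matrix.updateRow_self, Matrix.updateRow_ne hne, Matrix.updateRow_self]
      · rw [Matrix.updateRow_ne hil, Matrix.updateRow_ne hi0, hM, Matrix.updateRow_ne hi0,
          Matrix.updateRow_ne hil]
  have h4 : ((T.updateRow (Fin.last (m + 2)) (wvec m)).updateRow 0 (T 0 + uvec m)).det
      = (T.updateRow (Fin.last (m + 2)) (wvec m)).det
        + ((T.updateRow (Fin.last (m + 2)) (wvec m)).updateRow 0 (uvec m)).det := by
    rw [Matrix.det_updateRow_add]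
    congr 1
    have h5 : (T.updateRow (Fin.last (m + 2)) (wvec m)) 0 = T 0 :=
      Matrix.updateRow_ne (Ne.symm hne)
    rw [← h5, Matrix.updateRow_eq_self]
  rw [h2, h3, h4, hT, detT, detU, detW, detG]
  ring

end Part2

namespace Part3

noncomputable def zEquiv (n : ℕ) [NeZero n] : Fin n ≃ ZMod n where
  toFun i := ((i : ℕ) : ZMod n)
  invFun a := ⟨a.val, ZMod.val_lt a⟩
  left_inv i := by
    ext
    simp [ZMod.val_cast_of_lt i.isLt]
  right_inv a := ZMod.natCast_rightInverse a

lemma mod_succ_eq (m a : ℕ) (ha : a < m + 3) :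
    (a + 1) % (m + 3) = if a = m + 2 then 0 else a + 1 := by
  split_ifs with h
  · rw [h, show m + 2 + 1 = m + 3 from rfl, Nat.mod_self]
  · exact Nat.mod_eq_of_lt (by omega)

lemma cond1 (m : ℕ) (a b : Fin (m + 3)) :
    ((zEquiv (m + 3)) b = (zEquiv (m + 3)) a + 1) ↔
      ((b : ℕ) = (a : ℕ) + 1 ∨ ((a : ℕ) = m + 2 ∧ (b : ℕ) = 0)) := by
  have h1 : (zEquiv (m + 3)) a + 1 = (((a : ℕ) + 1 : ℕ) : ZMod (m + 3)) := by
    show ((a : ℕ) : ZMod (m + 3)) + 1 = _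
    push_cast
    ring
  rw [show (zEquiv (m + 3)) b = ((b : ℕ) : ZMod (m + 3)) from rfl, h1,
    ZMod.natCast_eq_natCast_iff', Nat.mod_eq_of_lt b.isLt, mod_succ_eq m a a.isLt]
  have hb := b.isLt
  split_ifs with h <;> omega

lemma cond2 (m : ℕ) (a b : Fin (m + 3)) :
    ((zEquiv (m + 3)) b = (zEquiv (m + 3)) a - 1) ↔
      ((a : ℕ) = (b : ℕ) + 1 ∨ ((b : ℕ) = m + 2 ∧ (a : ℕ) = 0)) := by
  rw [eq_sub_iff_add_eq]
  have h1 : (zEquiv (m + 3)) b + 1 = (((b : ℕ) + 1 : ℕ) : ZMod (m + 3)) := by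
    show ((b : ℕ) : ZMod (m + 3)) + 1 = _
    push_cast
    ring
  rw [show (zEquiv (m + 3)) a = ((a : ℕ) : ZMod (m + 3)) from rfl, h1,
    ZMod.natCast_eq_natCast_iff', Nat.mod_eq_of_lt a.isLt, mod_succ_eq m b b.isLt]
  have ha := a.isLt
  split_ifs with h <;> omega

lemma cond0 (m : ℕ) (a b : Fin (m + 3)) :
    ((zEquiv (m + 3)) a = (zEquiv (m + 3)) b) ↔ a = b :=
  ⟨fun h => (zEquiv (m + 3)).injective h, fun h => by rw [h]⟩

end Part3


theorem stmt_2 (n : ℕ) (hn : 3 ≤ n) (lam : ℝ) :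
    lapCharDet n lam = Polynomial.aeval (2 - lam) (A n) := by
  obtain ⟨m, rfl⟩ : ∃ m, n = m + 3 := ⟨n - 3, by omega⟩
  haveI : NeZero (m + 3) := ⟨by omega⟩
  rw [lapCharDet, dif_neg (by omega : ¬m + 3 = 0)]
  rw [← Matrix.det_submatrix_equiv_self (Part3.zEquiv (m + 3))]
  have hmat : (cycleLaplacian (m + 3) - lam • (1 : Matrix (ZMod (m + 3)) (ZMod (m + 3)) ℝ)).submatrix
      (Part3.zEquiv (m + 3)) (Part3.zEquiv (m + 3)) = Part2.Cm (2 - lam) (m + 3) := by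
    ext i j
    have hij := Part3.cond0 m i j
    have hc1 := Part3.cond1 m i j
    have hc2 := Part3.cond2 m i j
    have hi := i.isLt
    have hj := j.isLt
    simp only [Matrix.submatrix_apply, Matrix.sub_apply, Matrix.smul_apply, Matrix.one_apply,
      cycleLaplacian, Matrix.of_apply, smul_eq_mul, Part2.Cm, Part2.cf, hij, hc1, hc2,
      Fin.ext_iff]
    split_ifs <;>
      first
        | (exfalso; omega)
        | ring
  rw [hmat, Part2.detC]
  rw [show A (m + 3) = L (m + 3) - L (m + 1) - 2 from rfl]
  rw [map_sub, map_sub, map_ofNat]
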